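/- The 6-tuples (λ, g, ν, Δ, d, a) ∈ ℤ⁶ such that (λ, g, Δ, d, a) ∈ Γ₁₇₄, ν ≥ 0, the Le Barz bound holds, and the four inequalities −λ + 2g − ν − 3 ≥ 0, Δd − 42λ + 18g + ν − 12a + 326 ≥ 0, λ² − 199λ + 62g − ν − Δ − 48a + 1674 ≥ 0, and −λΔd − νΔd + 43λ² − 22λg + 4g² + 43λν − 22gν + 12λa + 12νa − 323λ − 8g − 323ν + 4 ≥ 0 all hold, are exactly the two tuples (14, 15, 0, 1, 5, 0) and (18, 28, 0, 3, 3, 1). -/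
import Mathlib
set_option maxHeartbeats 4000000


/-- The admissibility predicate from Lemma 2.2 of the paper. -/
def Admissible (l g D d a : ℤ) : Prop :=
  3 ≤ l ∧ l ≤ 27 ∧ 0 ≤ g ∧
  2 * g ≤ ((l - 2) / 3) * (2 * l - 8 - 3 * ((l - 2) / 3 - 1)) ∧
  1 ≤ d ∧ d ≤ 5 ∧ 1 ≤ D ∧ 0 ≤ a ∧
  (d = 5 ↔ D = 1) ∧ (d = 4 ↔ D = 2) ∧
  (D = 1 → a = 0) ∧ (D = 2 → a = 1) ∧ (3 ≤ D → 1 ≤ a) ∧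
  0 ≤ 2 * l - g + 1 ∧
  0 ≤ -21 * l + 6 * g - D * d + 237 ∧
  0 ≤ l ^ 2 + 9 * l - 18 * g + 18 ∧
  0 ≤ 49 * l ^ 2 - 28 * l * g + 4 * g ^ 2 + (D * d - 1106) * l + 316 * g - 27 * (D * d) + 6241 ∧
  0 ≤ 7 * D * l - 2 * D * g + D ^ 2 * d ^ 2 - 79 * D ∧
  0 ≤ l ^ 2 + 7 * l - 10 * g - 2 * (D * d) + 12 * a - 12 * (if d = 1 then (1 : ℤ) else 0) - 92 ∧
  0 ≤ -10 * l + 8 * g + 2 * (D * d) - 12 * a + 12 * (if d = 1 then (1 : ℤ) else 0) + 94 ∧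
  0 ≤ -290 * l + 140 * g - 13 * (D * d) + D + 2290 ∧
  0 ≤ -147 * l + 74 * g + 12 * (D * d) - D - 84 * a + 108 * (if d = 1 then (1 : ℤ) else 0) + 1183

/-- `CIFactor D s a` : there exist integers `e₁, …, e_a`, all `≥ 2`, with product `D` and sum `s`. -/
def CIFactor (D s a : ℤ) : Prop :=
  ∃ e : List ℤ, (e.length : ℤ) = a ∧ (∀ x ∈ e, 2 ≤ x) ∧ e.prod = D ∧ e.sum = s

/-- The set Γ₁₇₄ from the proof of Theorem 2.3 of the paper. -/
def Gamma174 (l g D d a : ℤ) : Prop :=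
  Admissible l g D d a ∧ d ≠ 1 ∧ CIFactor D (a + 5 - d) a

/-- `K_B · H_B²` for the base locus, from Lemma 2.1. -/
def KH2 (l g : ℤ) : ℤ := -2 * l + 2 * g - 2

/-- `K_B² · H_B` for the base locus, from Lemma 2.1. -/
def K2H (l g D d a : ℤ) : ℤ := -39 * l + 14 * g + D * d - 12 * a + 331

/-- `K_B³` for the base locus, from Lemma 2.1. -/
def K3 (l g D d a : ℤ) : ℤ := l ^ 2 - 77 * l + 14 * g - 3 * (D * d) - D - 12 * a + 688

/-- The Le Barz quadrisecant bound on the number ν of exceptional divisors. -/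
def LeBarz (l g ν D d a : ℤ) : Prop :=
  8 * ν ≤ l ^ 4 - 4 * l ^ 2 * (D * d) + 4 * D ^ 2 * d ^ 2 + 6 * l ^ 3 - 24 * l ^ 2 * g
    + 4 * l * (D * d) + 40 * g * (D * d) + 24 * l ^ 2 * a - 48 * (D * d) * a
    - 433 * l ^ 2 + 160 * l * g + 104 * g ^ 2 + 100 * (D * d) - 56 * l * a
    - 240 * g * a + 144 * a ^ 2 + 5650 * l - 784 * g - 168 * a - 23752


private lemma two_mul_length_le_sum : ∀ (e : List ℤ), (∀ x ∈ e, 2 ≤ x) → 2 * (e.length : ℤ) ≤ e.sum := by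
  intro e
  induction e with
  | nil => simp
  | cons x tl ih =>
    intro h
    have hx : 2 ≤ x := h x (by simp)
    have := ih (fun y hy => h y (by simp [hy]))
    simp only [List.length_cons, List.sum_cons]
    push_cast
    omega

private lemma combo_cases (D d a : ℤ) (hd2 : 2 ≤ d) (hd5 : d ≤ 5) (hD : 1 ≤ D)
    (h51 : d = 5 ↔ D = 1) (h42 : d = 4 ↔ D = 2)
    (hD1 : D = 1 → a = 0) (hD2 : D = 2 → a = 1) (hD3 : 3 ≤ D → 1 ≤ a)
    (hc : CIFactor D (a + 5 - d) a) :
    (D = 1 ∧ d = 5 ∧ a = 0) ∨ (D = 2 ∧ d = 4 ∧ a = 1) ∨ (D = 3 ∧ d = 3 ∧ a = 1) ∨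
    (D = 4 ∧ d = 3 ∧ a = 2) ∨ (D = 4 ∧ d = 2 ∧ a = 1) ∨ (D = 6 ∧ d = 2 ∧ a = 2) ∨
    (D = 8 ∧ d = 2 ∧ a = 3) := by
  obtain ⟨e, hlen, h2le, hprod, hsum⟩ := hc
  have hsl := two_mul_length_le_sum e h2le
  rcases e with _ | ⟨x, _ | ⟨y, _ | ⟨z, _ | ⟨w, tl⟩⟩⟩⟩
  · simp only [List.prod_nil, List.sum_nil, List.length_nil] at hprod hsum hlen
    omega
  · simp only [List.prod_cons, List.prod_nil, List.sum_cons, List.sum_nil,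
      List.length_cons, List.length_nil] at hprod hsum hlen
    have hx : 2 ≤ x := h2le x (by simp)
    omega
  · simp only [List.prod_cons, List.prod_nil, List.sum_cons, List.sum_nil,
      List.length_cons, List.length_nil] at hprod hsum hlen
    have hx : 2 ≤ x := h2le x (by simp)
    have hy : 2 ≤ y := h2le y (by simp)
    have hx3 : x ≤ 3 := by omega
    interval_cases x <;> omega
  · simp only [List.prod_cons, List.prod_nil, List.sum_cons, List.sum_nil,
      List.length_cons, List.length_nil] at hprod hsum hlen
    have hx : 2 ≤ x := h2le x (by simp)
    have hy : 2 ≤ y := h2le y (by simp)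
    have hz : 2 ≤ z := h2le z (by simp)
    have hx2 : x = 2 := by omega
    have hy2 : y = 2 := by omega
    have hz2 : z = 2 := by omega
    subst hx2 hy2 hz2
    norm_num at hprod
    omega
  · have h4 : 2 ≤ w := h2le w (by simp)
    simp only [List.length_cons] at hlen
    have h2le' : ∀ x ∈ tl, 2 ≤ x := fun y hy => h2le y (by simp [hy])
    have := two_mul_length_le_sum tl h2le'
    have hsl' : (0:ℤ) ≤ (tl.length : ℤ) := by positivity
    simp only [List.sum_cons] at hsum
    have hx : 2 ≤ x := h2le x (by simp)
    have hy : 2 ≤ y := h2le y (by simp)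
    have hz : 2 ≤ z := h2le z (by simp)
    omega

/-- In the proof of Theorem 2.3, the case where `K_R + H_R` is nef and big: the four
pluridegree inequalities select exactly `(14, 15, 0, 1, 5, 0)` and `(18, 28, 0, 3, 3, 1)`. -/
theorem nef_big_case_solutions (l g ν D d a : ℤ) :
    (Gamma174 l g D d a ∧ 0 ≤ ν ∧ LeBarz l g ν D d a ∧
      0 ≤ -l + 2 * g - ν - 3 ∧
      0 ≤ D * d - 42 * l + 18 * g + ν - 12 * a + 326 ∧
      0 ≤ l ^ 2 - 199 * l + 62 * g - ν - D - 48 * a + 1674 ∧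
      0 ≤ -l * (D * d) - ν * (D * d) + 43 * l ^ 2 - 22 * l * g + 4 * g ^ 2 + 43 * l * ν
          - 22 * g * ν + 12 * l * a + 12 * ν * a - 323 * l - 8 * g - 323 * ν + 4)
    ↔ ((l, g, ν, D, d, a) = (14, 15, 0, 1, 5, 0) ∨
        (l, g, ν, D, d, a) = (18, 28, 0, 3, 3, 1)) := by
  constructor
  · rintro ⟨⟨hadm, hd, hcif⟩, hnu, hLB, h1, h2, h3, h4⟩
    obtain ⟨a1, a2, a3, a4, a5, a6, a7, a8, a9, a10, a11, a12, a13, a14, a15, a16, a17,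
      a18, a19, a20, a21, a22⟩ := hadm
    have hif : (if d = 1 then (1:ℤ) else 0) = 0 := if_neg hd
    rw [hif] at a19 a20 a22
    unfold LeBarz at hLB
    simp only [Prod.mk.injEq]
    have hcombo := combo_cases D d a (by omega) a6 a7 a9 a10 a11 a12 a13 hcif
    clear hcif hif hd a9 a10 a11 a12 a13 a5 a6 a7 a8
    rcases hcombo with ⟨rfl, rfl, rfl⟩ | ⟨rfl, rfl, rfl⟩ | ⟨rfl, rfl, rfl⟩ |
      ⟨rfl, rfl, rfl⟩ | ⟨rfl, rfl, rfl⟩ | ⟨rfl, rfl, rfl⟩ | ⟨rfl, rfl, rfl⟩ <;>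
    · have hgub : g ≤ 2 * l + 1 := by omega
      have hglb1 : (21 * l - 232) / 6 ≤ g := by omega
      have hglb2 : (l + 3) / 2 ≤ g := by omega
      interval_cases l <;> interval_cases g <;> omega
  · rintro (h | h) <;> simp only [Prod.mk.injEq] at h <;>
      obtain ⟨rfl, rfl, rfl, rfl, rfl, rfl⟩ := h
    · refine ⟨⟨?_, by norm_num, ⟨[], by norm_num⟩⟩, by norm_num, ?_, by norm_num,
        by norm_num, by norm_num, by norm_num⟩
      · unfold Admissible; norm_num
      · unfold LeBarz; norm_num
    · refine ⟨⟨?_, by norm_num, ⟨[3], by norm_num⟩⟩, by norm_num, ?_, by norm_num,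
        by norm_num, by norm_num, by norm_num⟩
      · unfold Admissible; norm_num
      · unfold LeBarz; norm_num
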